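/- Let d ≥ 1, let D ⊆ ℝ^d be a bounded open set, let s_1, …, s_N ∈ ℝ^d be pairwise distinct, and let ν ∈ ℝ^N. If ψ* ∈ ℝ^N satisfies vol(V_i(s,ψ*)) = ν_i for every i = 1, …, N, then ψ* is a global maximizer of the Kantorovich functional: for every ψ ∈ ℝ^N one has K(s,ν,ψ) ≤ K(s,ν,ψ*). -/

import Mathlib

open MeasureTheory
open scoped RealInnerProductSpace

noncomputable section

/-- The Laguerre cell `Lag_i(s, ψ)` of the diagram of the domain `D` generated by the
seed points `s` and weights `ψ`. -/
def Lag {d N : ℕ} (D : Set (EuclideanSpace ℝ (Fin d)))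
    (s : Fin N → EuclideanSpace ℝ (Fin d)) (ψ : Fin N → ℝ) (i : Fin N) :
    Set (EuclideanSpace ℝ (Fin d)) :=
  {x | x ∈ closure D ∧ ∀ j : Fin N, j ≠ i → ‖x - s i‖ ^ 2 - ψ i ≤ ‖x - s j‖ ^ 2 - ψ j}

/-- The modified Laguerre cell `V_i(s, ψ)`: the Laguerre cell intersected with the
closed ball of center `s i` and radius `√(ψ i)`. -/
def Vcell {d N : ℕ} (D : Set (EuclideanSpace ℝ (Fin d)))
    (s : Fin N → EuclideanSpace ℝ (Fin d)) (ψ : Fin N → ℝ) (i : Fin N) :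
    Set (EuclideanSpace ℝ (Fin d)) :=
  Lag D s ψ i ∩ {x | ‖x - s i‖ ^ 2 ≤ ψ i}

/-- The void cell `V_0(s, ψ)`. -/
def Vvoid {d N : ℕ} (D : Set (EuclideanSpace ℝ (Fin d)))
    (s : Fin N → EuclideanSpace ℝ (Fin d)) (ψ : Fin N → ℝ) :
    Set (EuclideanSpace ℝ (Fin d)) :=
  {x | x ∈ closure D ∧ ∀ i : Fin N, 0 ≤ ‖x - s i‖ ^ 2 - ψ i}

/-- The Kantorovich functional `K(s, ν, ψ)`. -/
def Kfun {d N : ℕ} (D : Set (EuclideanSpace ℝ (Fin d)))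
    (s : Fin N → EuclideanSpace ℝ (Fin d)) (ν ψ : Fin N → ℝ) : ℝ :=
  (∑ i, ∫ x in Vcell D s ψ i, (‖x - s i‖ ^ 2 - ψ i)) + ∑ i, ν i * ψ i

section Aux

variable {d N : ℕ} {D : Set (EuclideanSpace ℝ (Fin d))}
  {s : Fin N → EuclideanSpace ℝ (Fin d)} {ψ : Fin N → ℝ}

/-- A hyperplane has Lebesgue measure zero. -/
lemma vol_hyperplane (v : EuclideanSpace ℝ (Fin d)) (hv : v ≠ 0) (c : ℝ) :
    volume {x : EuclideanSpace ℝ (Fin d) | ⟪x, v⟫ = c} = 0 := by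
  set K := LinearMap.ker ((innerSL ℝ v) : EuclideanSpace ℝ (Fin d) →L[ℝ] ℝ).toLinearMap with hK
  have hKne : K ≠ ⊤ := by
    intro h
    have hvK : v ∈ K := h ▸ Submodule.mem_top
    have : ⟪v, v⟫ = 0 := hvK
    rw [real_inner_self_eq_norm_sq] at this
    exact hv (by simpa using norm_eq_zero.mp (by nlinarith [norm_nonneg v]))
  set x0 : EuclideanSpace ℝ (Fin d) := (c / ‖v‖ ^ 2) • v with hx0
  have hvx0 : ⟪v, x0⟫ = c := by
    rw [hx0, real_inner_smul_right, real_inner_self_eq_norm_sq]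
    field_simp [pow_ne_zero 2 (norm_ne_zero_iff.mpr hv)]
  have hset : {x : EuclideanSpace ℝ (Fin d) | ⟪x, v⟫ = c}
      = (fun x => x + (-x0)) ⁻¹' (K : Set (EuclideanSpace ℝ (Fin d))) := by
    ext x
    simp only [Set.mem_setOf_eq, Set.mem_preimage, SetLike.mem_coe, hK, LinearMap.mem_ker,
      ContinuousLinearMap.coe_coe, innerSL_apply_apply]
    rw [← sub_eq_add_neg, inner_sub_right, hvx0, sub_eq_zero, real_inner_comm]
  rw [hset, measure_preimage_add_right]
  exact Measure.addHaar_submodule volume K hKne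

lemma contF (a : EuclideanSpace ℝ (Fin d)) (r : ℝ) :
    Continuous fun x : EuclideanSpace ℝ (Fin d) => ‖x - a‖ ^ 2 - r :=
  ((continuous_id.sub continuous_const).norm.pow 2).sub continuous_const

lemma isClosed_Vcell (i : Fin N) : IsClosed (Vcell D s ψ i) := by
  have h1 : IsClosed (Lag D s ψ i) := by
    have : Lag D s ψ i = closure D ∩ ⋂ j, ⋂ (_ : j ≠ i),
        {x | ‖x - s i‖ ^ 2 - ψ i ≤ ‖x - s j‖ ^ 2 - ψ j} := by
      ext x; simp [Lag]
    rw [this]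
    exact isClosed_closure.inter (isClosed_iInter fun j => isClosed_iInter fun _ =>
      isClosed_le (contF (s i) (ψ i)) (contF (s j) (ψ j)))
  exact h1.inter (isClosed_le ((continuous_id.sub continuous_const).norm.pow 2) continuous_const)

lemma isCompact_Vcell (hDb : Bornology.IsBounded D) (i : Fin N) :
    IsCompact (Vcell D s ψ i) := by
  apply Metric.isCompact_of_isClosed_isBounded (isClosed_Vcell i)
  exact hDb.closure.subset (fun x hx => hx.1.1)

lemma integrableOn_Vcell (hDb : Bornology.IsBounded D) (i : Fin N) (a : EuclideanSpace ℝ (Fin d))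
    (r : ℝ) : IntegrableOn (fun x => ‖x - a‖ ^ 2 - r) (Vcell D s ψ i) volume :=
  (contF a r).continuousOn.integrableOn_compact (isCompact_Vcell hDb i)

/-- If `x` is in the closure of `D` and lies in no modified Laguerre cell, then all
costs are nonnegative at `x`. -/
lemma nonneg_of_not_mem (x : EuclideanSpace ℝ (Fin d)) (hx : x ∈ closure D)
    (h : ∀ i, x ∉ Vcell D s ψ i) (i : Fin N) : 0 ≤ ‖x - s i‖ ^ 2 - ψ i := by
  by_contra hneg
  push_neg at hneg
  obtain ⟨j, -, hj⟩ := Finset.exists_min_image Finset.univ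
    (fun j => ‖x - s j‖ ^ 2 - ψ j) ⟨i, Finset.mem_univ i⟩
  refine h j ⟨⟨hx, fun k _ => hj k (Finset.mem_univ k)⟩, ?_⟩
  have := hj i (Finset.mem_univ i)
  simp only [Set.mem_setOf_eq]
  linarith

end Aux

/-- A weight vector realizing the prescribed cell measures is a global maximizer of the
Kantorovich functional. -/
theorem stmt1 {d N : ℕ} (hd : 1 ≤ d)
    (D : Set (EuclideanSpace ℝ (Fin d)))
    (hDo : IsOpen D) (hDb : Bornology.IsBounded D)
    (s : Fin N → EuclideanSpace ℝ (Fin d)) (hs : Function.Injective s)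
    (ν : Fin N → ℝ) (ψstar : Fin N → ℝ)
    (hψ : ∀ i, (volume (Vcell D s ψstar i)).toReal = ν i) :
    ∀ ψ : Fin N → ℝ, Kfun D s ν ψ ≤ Kfun D s ν ψstar := by
  intro ψ
  -- the null set where two ψ* cells can overlap
  set Z : Set (EuclideanSpace ℝ (Fin d)) :=
    ⋃ i, ⋃ j, ⋃ (_ : i ≠ j),
      {x | ‖x - s i‖ ^ 2 - ψstar i = ‖x - s j‖ ^ 2 - ψstar j} with hZ
  have hZ0 : volume Z = 0 := by
    rw [hZ]
    refine measure_iUnion_null fun i => measure_iUnion_null fun j => measure_iUnion_null fun hij => ?_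
    have hv : (2 : ℝ) • (s j - s i) ≠ 0 := by
      simp only [ne_eq, smul_eq_zero, sub_eq_zero]
      push_neg
      exact ⟨by norm_num, fun h => hij (hs h.symm)⟩
    refine measure_mono_null ?_ (vol_hyperplane ((2 : ℝ) • (s j - s i)) hv
      (‖s j‖ ^ 2 - ‖s i‖ ^ 2 + ψstar i - ψstar j))
    intro x hx
    simp only [Set.mem_setOf_eq] at hx ⊢
    rw [norm_sub_sq_real x (s i), norm_sub_sq_real x (s j)] at hx
    rw [real_inner_smul_right, inner_sub_right]
    linarith
  -- indicator functions
  set f : Fin N → EuclideanSpace ℝ (Fin d) → ℝ :=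
    fun i => (Vcell D s ψ i).indicator (fun x => ‖x - s i‖ ^ 2 - ψ i) with hf
  set g : Fin N → EuclideanSpace ℝ (Fin d) → ℝ :=
    fun i => (Vcell D s ψstar i).indicator
      (fun x => (‖x - s i‖ ^ 2 - ψstar i) + (ψstar i - ψ i)) with hg
  have hfint : ∀ i, Integrable (f i) volume := fun i =>
    (integrableOn_Vcell hDb i (s i) (ψ i)).integrable_indicator
      (isCompact_Vcell hDb i).measurableSet
  have hgint : ∀ i, Integrable (g i) volume := by
    intro i
    have : IntegrableOn (fun x => (‖x - s i‖ ^ 2 - ψstar i) + (ψstar i - ψ i))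
        (Vcell D s ψstar i) volume := by
      have := integrableOn_Vcell (s := s) (ψ := ψstar) hDb i (s i) (ψstar i - (ψstar i - ψ i))
      simpa [sub_sub, sub_add_eq_sub_sub] using this.congr_fun (fun x _ => by ring)
        (isCompact_Vcell hDb i).measurableSet
    exact this.integrable_indicator (isCompact_Vcell hDb i).measurableSet
  -- key pointwise inequality away from Z
  have key : ∀ x ∉ Z, (∑ i, f i x) ≤ ∑ i, g i x := by
    intro x hxZ
    have hterm_nonpos : ∀ i, f i x ≤ 0 := by
      intro i
      simp only [hf]
      by_cases hxi : x ∈ Vcell D s ψ i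
      · simp only [Set.indicator_of_mem hxi]
        have := hxi.2
        simp only [Set.mem_setOf_eq] at this
        linarith
      · simp only [Set.indicator_of_notMem hxi]; exact le_rfl
    by_cases hstar : ∃ i, x ∈ Vcell D s ψstar i
    · obtain ⟨i, hi⟩ := hstar
      -- uniqueness of the ψ* cell containing x
      have huniq : ∀ j, j ≠ i → x ∉ Vcell D s ψstar j := by
        intro j hj hxj
        apply hxZ
        rw [hZ]
        refine Set.mem_iUnion.mpr ⟨i, Set.mem_iUnion.mpr ⟨j, Set.mem_iUnion.mpr ⟨hj.symm, ?_⟩⟩⟩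
        have h1 := hi.1.2 j hj
        have h2 := hxj.1.2 i (Ne.symm hj)
        simp only [Set.mem_setOf_eq]
        linarith
      have hRHS : ∑ j, g j x = ‖x - s i‖ ^ 2 - ψ i := by
        rw [Finset.sum_eq_single_of_mem i (Finset.mem_univ i)]
        · simp only [hg, Set.indicator_of_mem hi]; ring
        · intro j _ hj
          simp only [hg, Set.indicator_of_notMem (huniq j hj)]
      rw [hRHS]
      by_cases hψcell : ∃ j, x ∈ Vcell D s ψ j
      · obtain ⟨j, hj⟩ := hψcell
        have hji : ‖x - s j‖ ^ 2 - ψ j ≤ ‖x - s i‖ ^ 2 - ψ i := by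
          by_cases hij : j = i
          · subst hij; exact le_rfl
          · exact hj.1.2 i (fun h => hij h.symm)
        have hfj : f j x = ‖x - s j‖ ^ 2 - ψ j := by
          simp only [hf, Set.indicator_of_mem hj]
        calc ∑ k, f k x = f j x + ∑ k ∈ Finset.univ.erase j, f k x :=
              (Finset.add_sum_erase _ _ (Finset.mem_univ j)).symm
          _ ≤ f j x + 0 := by
              gcongr
              exact Finset.sum_nonpos fun k _ => hterm_nonpos k
          _ ≤ ‖x - s i‖ ^ 2 - ψ i := by rw [hfj] at *; linarith
      · push_neg at hψcell
        have h0 : ∀ k, f k x = 0 := by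
          intro k; simp only [hf, Set.indicator_of_notMem (hψcell k)]
        simp only [h0, Finset.sum_const_zero]
        exact nonneg_of_not_mem x hi.1.1 hψcell i
    · push_neg at hstar
      have hRHS : ∑ j, g j x = 0 := by
        refine Finset.sum_eq_zero fun j _ => ?_
        simp only [hg, Set.indicator_of_notMem (hstar j)]
      rw [hRHS]
      exact Finset.sum_nonpos fun k _ => hterm_nonpos k
  -- integrate the pointwise inequality
  have hae : (fun x => ∑ i, f i x) ≤ᵐ[volume] (fun x => ∑ i, g i x) := by
    filter_upwards [measure_eq_zero_iff_ae_notMem.mp hZ0] with x hx using key x hx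
  have hint : (∫ x, ∑ i, f i x) ≤ ∫ x, ∑ i, g i x :=
    integral_mono_ae (integrable_finset_sum _ fun i _ => hfint i)
      (integrable_finset_sum _ fun i _ => hgint i) hae
  rw [integral_finset_sum _ fun i _ => hfint i, integral_finset_sum _ fun i _ => hgint i] at hint
  have hfi : ∀ i, (∫ x, f i x) = ∫ x in Vcell D s ψ i, (‖x - s i‖ ^ 2 - ψ i) := by
    intro i; rw [hf, integral_indicator (isCompact_Vcell hDb i).measurableSet]
  have hgi : ∀ i, (∫ x, g i x)
      = (∫ x in Vcell D s ψstar i, (‖x - s i‖ ^ 2 - ψstar i)) + ν i * (ψstar i - ψ i) := by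
    intro i
    rw [hg, integral_indicator (isCompact_Vcell hDb i).measurableSet]
    rw [integral_add (integrableOn_Vcell hDb i (s i) (ψstar i)) (integrableOn_const
      (isCompact_Vcell hDb i).measure_lt_top.ne)]
    rw [setIntegral_const, measureReal_def, hψ i, smul_eq_mul]
  simp only [hfi, hgi] at hint
  rw [Finset.sum_add_distrib] at hint
  unfold Kfun
  have : ∑ i, ν i * ψ i + ∑ i, ν i * (ψstar i - ψ i) = ∑ i, ν i * ψstar i := by
    rw [← Finset.sum_add_distrib]
    exact Finset.sum_congr rfl fun i _ => by ring
  linarith
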